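/- In a CFG, every node v with v ≠ End has a unique first proper postdominator: there exists exactly one proper postdominator v1 of v such that for every proper postdominator v2 of v with v2 ≠ v1, every path from v to v2 contains v1. -/

import Mathlib

namespace Slicing

/-- A path is a nonempty list of nodes, consecutive ones related by `succ`,
starting at `v` and ending at `v'`. -/
def IsPath {V : Type} (succ : V → V → Prop) (p : List V) (v v' : V) : Prop :=
  p.Chain' succ ∧ p.head? = some v ∧ p.getLast? = some v'

/-- A control-flow graph: an edge relation and an `End` node with no successors,
reachable from every node. -/
structure CFG (V : Type) where
  succ : V → V → Prop
  End : V
  end_no_succ : ∀ w, ¬ succ End w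
  reach_end : ∀ v, ∃ p, IsPath succ p v End

variable {V : Type}

/-- `v1` postdominates `v`. -/
def PD (G : CFG V) (v v1 : V) : Prop :=
  ∀ p, IsPath G.succ p v G.End → v1 ∈ p

/-- `v1` is a proper postdominator of `v`. -/
def ProperPD (G : CFG V) (v v1 : V) : Prop :=
  PD G v v1 ∧ v1 ≠ v

/-- `v1` is a first proper postdominator of `v`: every path from `v` to any other
proper postdominator of `v` contains `v1`. -/
def IsFPPD (G : CFG V) (v v1 : V) : Prop :=
  ProperPD G v v1 ∧
    ∀ v2, ProperPD G v v2 → v2 ≠ v1 → ∀ p, IsPath G.succ p v v2 → v1 ∈ p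

/-- Maximum number of edges of an acyclic path from `v` to `v'`. -/
noncomputable def LAP (G : CFG V) (v v' : V) : ℕ :=
  sSup {n | ∃ p, IsPath G.succ p v v' ∧ p.Nodup ∧ p.length = n + 1}

/-- A node is cycle-inducing if, with `v'` its first proper postdominator,
some successor `vi` of `v` satisfies `LAP vi v' ≥ LAP v v'`. -/
def CycleInducing (G : CFG V) (v : V) : Prop :=
  ∃ v', IsFPPD G v v' ∧ ∃ vi, G.succ v vi ∧ LAP G v v' ≤ LAP G vi v'

/-- `v` stays outside `Q` until `v'`: every path from `v` to `v'` in which `v'`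
occurs only at the final position contains no node of `Q` except possibly `v'`. -/
def StaysOutside (G : CFG V) (Q : Set V) (v v' : V) : Prop :=
  ∀ p, IsPath G.succ p v v' → v' ∉ p.dropLast → ∀ w ∈ p, w ∈ Q → w = v'

/-- `v2` is data dependent on `v1`. -/
def DataDep {Var : Type} (G : CFG V) (Def Use : V → Set Var) (v1 v2 : V) : Prop :=
  ∃ x, x ∈ Use v2 ∧ x ∈ Def v1 ∧
    ∃ p, IsPath G.succ p v1 v2 ∧ 2 ≤ p.length ∧ ∀ w ∈ p.tail.dropLast, x ∉ Def w

/-- `Q` is closed under data dependence. -/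
def ClosedDD {Var : Type} (G : CFG V) (Def Use : V → Set Var) (Q : Set V) : Prop :=
  ∀ v1 v2, v2 ∈ Q → DataDep G Def Use v1 v2 → v1 ∈ Q

/-- The `Q`-relevant variables at `v`. -/
def rv {Var : Type} (G : CFG V) (Def Use : V → Set Var) (Q : Set V) (v : V) : Set Var :=
  {x | ∃ v' ∈ Q, x ∈ Use v' ∧
    ∃ p, IsPath G.succ p v v' ∧ p.Nodup ∧ ∀ w ∈ p, w ≠ v' → x ∉ Def w}

/-- `v'` is a next visible in `Q` of `v`. -/
def IsNextVisible (G : CFG V) (Q : Set V) (v v' : V) : Prop :=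
  (v' ∈ Q ∨ v' = G.End) ∧
    ∀ u, (u ∈ Q ∨ u = G.End) → ∀ p, IsPath G.succ p v u → v' ∈ p

/-- `Q` provides next visibles. -/
def ProvidesNextVisibles (G : CFG V) (Q : Set V) : Prop :=
  ∀ v, ∃ v', IsNextVisible G Q v v'

/-- A weak slice set provides next visibles and is closed under data dependence. -/
def WeakSliceSet {Var : Type} (G : CFG V) (Def Use : V → Set Var) (Q : Set V) : Prop :=
  ProvidesNextVisibles G Q ∧ ClosedDD G Def Use Q

end Slicing

namespace Slicing

variable {V : Type}

lemma mem_of_getLast?' {p : List V} {a : V} (h : p.getLast? = some a) : a ∈ p := by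
  cases p with
  | nil => exact absurd h (by simp)
  | cons b t =>
    rw [List.getLast?_eq_getLast (l := b :: t) (by simp)] at h
    have hm := List.getLast_mem (l := b :: t) (by simp)
    exact Option.some_inj.1 h ▸ hm

lemma isPath_ne_nil {succ : V → V → Prop} {p : List V} {v v' : V}
    (h : IsPath succ p v v') : p ≠ [] := by
  intro hnil
  rw [hnil] at h
  exact absurd h.2.1 (by simp)

lemma isPath_mem_left {succ : V → V → Prop} {p : List V} {v v' : V}
    (h : IsPath succ p v v') : v ∈ p :=
  List.mem_of_mem_head? (by rw [h.2.1]; exact rfl)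

lemma isPath_mem_right {succ : V → V → Prop} {p : List V} {v v' : V}
    (h : IsPath succ p v v') : v' ∈ p :=
  mem_of_getLast?' h.2.2

lemma indexOf_lt_of_mem_take [DecidableEq V] {p : List V} {x : V} {k : ℕ}
    (h : x ∈ p.take k) : p.idxOf x < k := by
  induction p generalizing k with
  | nil => simp at h
  | cons a t ih =>
    cases k with
    | zero => simp at h
    | succ m =>
      simp only [List.take_succ_cons, List.mem_cons] at h
      by_cases hxa : x = a
      · subst hxa; simp [List.idxOf_cons_self]
      · rcases h with h | h
        · exact absurd h hxa
        · rw [List.idxOf_cons_ne _ (Ne.symm hxa)]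
          exact Nat.succ_lt_succ (ih h)

lemma isPath_take [DecidableEq V] {succ : V → V → Prop} {p : List V} {v v' w : V}
    (h : IsPath succ p v v') (hw : w ∈ p) :
    IsPath succ (p.take (p.idxOf w + 1)) v w := by
  have hlt : p.idxOf w < p.length := List.idxOf_lt_length_iff.2 hw
  refine ⟨h.1.take _, ?_, ?_⟩
  · cases p with
    | nil => exact absurd hw (by simp)
    | cons a t => simpa using h.2.1
  · rw [List.getLast?_eq_getElem?]
    have hlen : (p.take (p.idxOf w + 1)).length = p.idxOf w + 1 := by
      rw [List.length_take]; omega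
    rw [hlen]
    simp only [Nat.add_sub_cancel, List.getElem?_take, if_pos (Nat.lt_succ_self _)]
    rw [List.getElem?_eq_getElem hlt, List.getElem_idxOf hlt]

lemma isPath_drop [DecidableEq V] {succ : V → V → Prop} {p : List V} {v v' w : V}
    (h : IsPath succ p v v') (hw : w ∈ p) :
    IsPath succ (p.drop (p.idxOf w)) w v' := by
  have hlt : p.idxOf w < p.length := List.idxOf_lt_length_iff.2 hw
  refine ⟨h.1.drop _, ?_, ?_⟩
  · rw [List.head?_drop, List.getElem?_eq_getElem hlt, List.getElem_idxOf hlt]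
  · have hne : p.drop (p.idxOf w) ≠ [] := by
      intro hnil
      have := (List.length_drop (i := p.idxOf w) (l := p)) ▸ congrArg List.length hnil
      simp [List.length_drop] at this; omega
    have := List.take_append_drop (p.idxOf w) p
    have h2 := h.2.2
    rw [← this, List.getLast?_append] at h2
    rcases ho : (p.drop (p.idxOf w)).getLast? with _ | a
    · exact absurd ho (by simpa [List.getLast?_eq_none_iff] using hne)
    · rw [ho] at h2; simpa using h2

lemma isPath_append {succ : V → V → Prop} {p q : List V} {v w u : V}
    (h1 : IsPath succ p v w) (h2 : IsPath succ q w u) :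
    IsPath succ (p ++ q.tail) v u := by
  have hpne : p ≠ [] := isPath_ne_nil h1
  cases q with
  | nil => exact absurd rfl (isPath_ne_nil h2)
  | cons a t =>
    have haw : a = w := by simpa using h2.2.1
    subst haw
    cases t with
    | nil =>
      have huw : a = u := by simpa using h2.2.2
      subst huw
      simpa using h1
    | cons b t' =>
      have hchain : succ a b ∧ (b :: t').Chain' succ := by
        have := h2.1
        replace this := List.isChain_cons_cons.1 this
        exact this
      refine ⟨?_, ?_, ?_⟩
      · refine List.IsChain.append h1.1 hchain.2 ?_
        intro x hx y hy
        rw [h1.2.2] at hx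
        simp only [List.tail_cons, List.head?_cons, Option.mem_some_iff] at hx hy
        subst hx; subst hy; exact hchain.1
      · rw [List.head?_append_of_ne_nil _ hpne]; exact h1.2.1
      · show (p ++ b :: t').getLast? = some u
        rw [List.getLast?_append]
        have hbt : (b :: t').getLast? = some u := by
          have h22 := h2.2.2
          rw [show (a :: b :: t') = [a] ++ (b :: t') from rfl, List.getLast?_append] at h22
          rcases ho : (b :: t').getLast? with _ | c
          · simp at ho
          · rw [ho] at h22; simpa using h22
        rw [hbt]; exact rfl

/-- minimal path length from `v` to `End`. -/
noncomputable def minLen (G : CFG V) (v : V) : ℕ :=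
  sInf {n | ∃ p, IsPath G.succ p v G.End ∧ p.length = n}

lemma minLen_nonempty (G : CFG V) (v : V) :
    {n | ∃ p, IsPath G.succ p v G.End ∧ p.length = n}.Nonempty := by
  obtain ⟨p, hp⟩ := G.reach_end v
  exact ⟨p.length, p, hp, rfl⟩

lemma indexOf_pos [DecidableEq V] {succ : V → V → Prop} {p : List V} {v v' w : V}
    (h : IsPath succ p v v') (hne : v ≠ w) : 0 < p.idxOf w := by
  cases p with
  | nil => exact absurd rfl (isPath_ne_nil h)
  | cons a t =>
    have hav : a = v := by simpa using h.2.1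
    subst hav
    rw [List.idxOf_cons_ne _ hne]
    exact Nat.succ_pos _

lemma minLen_lt [DecidableEq V] (G : CFG V) {a b : V} (hab : a ≠ b) (hpd : PD G a b) :
    minLen G b < minLen G a := by
  have hmem : ∃ p, IsPath G.succ p a G.End ∧ p.length = minLen G a :=
    Nat.sInf_mem (minLen_nonempty G a)
  obtain ⟨p, hp, hlen⟩ := hmem
  have hb : b ∈ p := hpd p hp
  have hpos : 0 < p.idxOf b := indexOf_pos hp hab
  have hlt : p.idxOf b < p.length := List.idxOf_lt_length_iff.2 hb
  have hq := isPath_drop hp hb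
  have : minLen G b ≤ (p.drop (p.idxOf b)).length :=
    Nat.sInf_le ⟨_, hq, rfl⟩
  rw [List.length_drop] at this
  omega

lemma not_both_pd [DecidableEq V] (G : CFG V) {a b : V} (hab : a ≠ b)
    (h1 : PD G a b) (h2 : PD G b a) : False := by
  have := minLen_lt G hab h1
  have := minLen_lt G hab.symm h2
  omega

lemma pd_total [DecidableEq V] (G : CFG V) {v v1 v2 : V}
    (h1 : ProperPD G v v1) (h2 : ProperPD G v v2) (hne : v1 ≠ v2) :
    (∀ p, IsPath G.succ p v v2 → v1 ∈ p) ∨ (∀ p, IsPath G.succ p v v1 → v2 ∈ p) := by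
  by_contra hcon
  push_neg at hcon
  obtain ⟨⟨q, hq, hq1⟩, ⟨r, hr, hr2⟩⟩ := hcon
  have hpd21 : PD G v2 v1 := by
    intro s hs
    have hcomb := isPath_append hq hs
    have := h1.1 _ hcomb
    rcases List.mem_append.1 this with h | h
    · exact absurd h hq1
    · exact List.mem_of_mem_tail h
  have hpd12 : PD G v1 v2 := by
    intro s hs
    have hcomb := isPath_append hr hs
    have := h2.1 _ hcomb
    rcases List.mem_append.1 this with h | h
    · exact absurd h hr2
    · exact List.mem_of_mem_tail h
  exact not_both_pd G hne hpd12 hpd21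

lemma idx_lt [DecidableEq V] {p0 : List V} {x y : V}
    (hx : x ∈ p0) (hy : y ∈ p0.take (p0.idxOf x + 1)) (hne : y ≠ x) :
    p0.idxOf y < p0.idxOf x := by
  have hle : p0.idxOf y < p0.idxOf x + 1 := indexOf_lt_of_mem_take hy
  have hxlt : p0.idxOf x < p0.length := List.idxOf_lt_length_iff.2 hx
  rcases Nat.lt_or_ge (p0.idxOf y) (p0.idxOf x) with h | h
  · exact h
  · exfalso
    have heq : p0.idxOf y = p0.idxOf x := by omega
    have hymem : y ∈ p0 := List.mem_of_mem_take hy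
    have hylt : p0.idxOf y < p0.length := List.idxOf_lt_length_iff.2 hymem
    have : y = x := by
      rw [← List.getElem_idxOf hylt, ← List.getElem_idxOf hxlt]
      simp [heq]
    exact hne this

/-- Every node `v ≠ End` has a unique first proper postdominator. -/
theorem unique_first_proper_postdominator {V : Type} [Fintype V]
    (G : CFG V) (v : V) (hv : v ≠ G.End) :
    ∃! v1, IsFPPD G v v1 := by
  classical
  obtain ⟨p0, hp0⟩ := G.reach_end v
  have hEnd : ProperPD G v G.End :=
    ⟨fun p hp => isPath_mem_right hp, fun h => hv h.symm⟩
  set K : Set ℕ := {n | ∃ w, ProperPD G v w ∧ p0.idxOf w = n} with hK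
  have hKne : K.Nonempty := ⟨_, G.End, hEnd, rfl⟩
  obtain ⟨v1, hv1, hidx⟩ := Nat.sInf_mem hKne
  have hfppd : IsFPPD G v v1 := by
    refine ⟨hv1, ?_⟩
    intro v2 h2 hne q hq
    rcases pd_total G hv1 h2 (Ne.symm hne) with h | h
    · exact h q hq
    · exfalso
      have hv1p0 : v1 ∈ p0 := hv1.1 p0 hp0
      have hpp := isPath_take hp0 hv1p0
      have hv2pp : v2 ∈ p0.take (p0.idxOf v1 + 1) := h _ hpp
      have hlt : p0.idxOf v2 < p0.idxOf v1 := idx_lt hv1p0 hv2pp hne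
      have : sInf K ≤ p0.idxOf v2 := Nat.sInf_le ⟨v2, h2, rfl⟩
      omega
  refine ⟨v1, hfppd, ?_⟩
  intro y hy
  by_contra hne
  have h1 : ∀ p, IsPath G.succ p v v1 → y ∈ p :=
    hy.2 v1 hv1 (fun h => hne h.symm)
  have h2 : ∀ p, IsPath G.succ p v y → v1 ∈ p :=
    hfppd.2 y hy.1 hne
  have hv1p0 : v1 ∈ p0 := hv1.1 p0 hp0
  have hyp0 : y ∈ p0 := hy.1.1 p0 hp0
  have l1 : p0.idxOf y < p0.idxOf v1 :=
    idx_lt hv1p0 (h1 _ (isPath_take hp0 hv1p0)) hne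
  have l2 : p0.idxOf v1 < p0.idxOf y :=
    idx_lt hyp0 (h2 _ (isPath_take hp0 hyp0)) (fun h => hne h.symm)
  omega


end Slicing
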